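/- For a vertically mapped wedge with J > 0, the geometric factors r_x, r_y, s_x, s_y and the product t_z·J are constant functions of the reference coordinates (r,s,t). -/

import Mathlib

noncomputable section

/-- Vertex basis functions of the reference wedge. -/
def wv : Fin 6 → ℝ → ℝ → ℝ → ℝ
  | 0 => fun r s t => (1 - r - s) * (1 - t)
  | 1 => fun r s t => r * (1 - t)
  | 2 => fun r s t => s * (1 - t)
  | 3 => fun r s t => (1 - r - s) * t
  | 4 => fun r s t => r * t
  | 5 => fun r s t => s * t

/-- The `i`-th coordinate of the trilinear vertex mapping `Φ` with vertices `ν`. -/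
def wedgeMap (ν : Fin 6 → Fin 3 → ℝ) (i : Fin 3) (r s t : ℝ) : ℝ :=
  ∑ k : Fin 6, ν k i * wv k r s t

/-- A wedge is vertically mapped if the x and y coordinates agree within each
vertex pair (ν₁,ν₄), (ν₂,ν₅), (ν₃,ν₆). -/
def VerticallyMapped (ν : Fin 6 → Fin 3 → ℝ) : Prop :=
  (ν 0 0 = ν 3 0 ∧ ν 0 1 = ν 3 1) ∧
  (ν 1 0 = ν 4 0 ∧ ν 1 1 = ν 4 1) ∧
  (ν 2 0 = ν 5 0 ∧ ν 2 1 = ν 5 1)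

/-- partial derivative in the first (r) variable -/
def pdr (f : ℝ → ℝ → ℝ → ℝ) (r s t : ℝ) : ℝ := deriv (fun x => f x s t) r
/-- partial derivative in the second (s) variable -/
def pds (f : ℝ → ℝ → ℝ → ℝ) (r s t : ℝ) : ℝ := deriv (fun x => f r x t) s
/-- partial derivative in the third (t) variable -/
def pdt (f : ℝ → ℝ → ℝ → ℝ) (r s t : ℝ) : ℝ := deriv (fun x => f r s x) t

/-- Jacobian determinant of the wedge mapping. -/
def wedgeJac (ν : Fin 6 → Fin 3 → ℝ) (r s t : ℝ) : ℝ :=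
  Matrix.det !![pdr (wedgeMap ν 0) r s t, pds (wedgeMap ν 0) r s t, pdt (wedgeMap ν 0) r s t;
                pdr (wedgeMap ν 1) r s t, pds (wedgeMap ν 1) r s t, pdt (wedgeMap ν 1) r s t;
                pdr (wedgeMap ν 2) r s t, pds (wedgeMap ν 2) r s t, pdt (wedgeMap ν 2) r s t]

/-- x component shorthand -/
def X (ν : Fin 6 → Fin 3 → ℝ) : ℝ → ℝ → ℝ → ℝ := wedgeMap ν 0
def Y (ν : Fin 6 → Fin 3 → ℝ) : ℝ → ℝ → ℝ → ℝ := wedgeMap ν 1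
def Z (ν : Fin 6 → Fin 3 → ℝ) : ℝ → ℝ → ℝ → ℝ := wedgeMap ν 2

def gRx (ν : Fin 6 → Fin 3 → ℝ) (r s t : ℝ) : ℝ :=
  (pds (Y ν) r s t * pdt (Z ν) r s t - pds (Z ν) r s t * pdt (Y ν) r s t) / wedgeJac ν r s t
def gRy (ν : Fin 6 → Fin 3 → ℝ) (r s t : ℝ) : ℝ :=
  -(pds (X ν) r s t * pdt (Z ν) r s t - pds (Z ν) r s t * pdt (X ν) r s t) / wedgeJac ν r s t
def gSx (ν : Fin 6 → Fin 3 → ℝ) (r s t : ℝ) : ℝ :=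
  -(pdr (Y ν) r s t * pdt (Z ν) r s t - pdr (Z ν) r s t * pdt (Y ν) r s t) / wedgeJac ν r s t
def gSy (ν : Fin 6 → Fin 3 → ℝ) (r s t : ℝ) : ℝ :=
  (pdr (X ν) r s t * pdt (Z ν) r s t - pdr (Z ν) r s t * pdt (X ν) r s t) / wedgeJac ν r s t
/-- t_z · J  (note t_z = (x_r y_s − y_r x_s)/J, so t_z·J = x_r y_s − y_r x_s). -/
def gTzJ (ν : Fin 6 → Fin 3 → ℝ) (r s t : ℝ) : ℝ :=
  pdr (X ν) r s t * pds (Y ν) r s t - pdr (Y ν) r s t * pds (X ν) r s t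

lemma pdr_wedge (ν : Fin 6 → Fin 3 → ℝ) (i : Fin 3) (r s t : ℝ) :
    pdr (wedgeMap ν i) r s t = (ν 1 i - ν 0 i) * (1 - t) + (ν 4 i - ν 3 i) * t := by
  have h : (fun x => wedgeMap ν i x s t)
      = fun x => ((ν 1 i - ν 0 i) * (1 - t) + (ν 4 i - ν 3 i) * t) * x
        + (ν 0 i * ((1 - s) * (1 - t)) + ν 2 i * (s * (1 - t))
          + ν 3 i * ((1 - s) * t) + ν 5 i * (s * t)) := by
    funext x
    simp [wedgeMap, wv, Fin.sum_univ_six]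
    ring
  rw [pdr, h, deriv_add_const]
  simpa using ((hasDerivAt_id r).const_mul ((ν 1 i - ν 0 i) * (1 - t) + (ν 4 i - ν 3 i) * t)).deriv

lemma pds_wedge (ν : Fin 6 → Fin 3 → ℝ) (i : Fin 3) (r s t : ℝ) :
    pds (wedgeMap ν i) r s t = (ν 2 i - ν 0 i) * (1 - t) + (ν 5 i - ν 3 i) * t := by
  have h : (fun x => wedgeMap ν i r x t)
      = fun x => ((ν 2 i - ν 0 i) * (1 - t) + (ν 5 i - ν 3 i) * t) * x
        + (ν 0 i * ((1 - r) * (1 - t)) + ν 1 i * (r * (1 - t))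
          + ν 3 i * ((1 - r) * t) + ν 4 i * (r * t)) := by
    funext x
    simp [wedgeMap, wv, Fin.sum_univ_six]
    ring
  rw [pds, h, deriv_add_const]
  simpa using ((hasDerivAt_id s).const_mul ((ν 2 i - ν 0 i) * (1 - t) + (ν 5 i - ν 3 i) * t)).deriv

lemma pdt_wedge (ν : Fin 6 → Fin 3 → ℝ) (i : Fin 3) (r s t : ℝ) :
    pdt (wedgeMap ν i) r s t
      = (ν 3 i - ν 0 i) * (1 - r - s) + (ν 4 i - ν 1 i) * r + (ν 5 i - ν 2 i) * s := by
  have h : (fun x => wedgeMap ν i r s x)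
      = fun x => ((ν 3 i - ν 0 i) * (1 - r - s) + (ν 4 i - ν 1 i) * r + (ν 5 i - ν 2 i) * s) * x
        + (ν 0 i * (1 - r - s) + ν 1 i * r + ν 2 i * s) := by
    funext x
    simp [wedgeMap, wv, Fin.sum_univ_six]
    ring
  rw [pdt, h, deriv_add_const]
  simpa using ((hasDerivAt_id t).const_mul
    ((ν 3 i - ν 0 i) * (1 - r - s) + (ν 4 i - ν 1 i) * r + (ν 5 i - ν 2 i) * s)).deriv

/-- For a vertically mapped wedge with J > 0, the geometric factors
r_x, r_y, s_x, s_y and the product t_z·J are constant functions of (r,s,t). -/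
theorem stmt4 (ν : Fin 6 → Fin 3 → ℝ) (hν : VerticallyMapped ν)
    (hJ : ∀ r s t : ℝ, 0 < wedgeJac ν r s t) :
    ∀ r s t r' s' t' : ℝ,
      gRx ν r s t = gRx ν r' s' t' ∧ gRy ν r s t = gRy ν r' s' t' ∧
      gSx ν r s t = gSx ν r' s' t' ∧ gSy ν r s t = gSy ν r' s' t' ∧
      gTzJ ν r s t = gTzJ ν r' s' t' := by
  obtain ⟨⟨h00, h01⟩, ⟨h10, h11⟩, ⟨h20, h21⟩⟩ := hν
  set a := ν 1 0 - ν 0 0 with ha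
  set b := ν 2 0 - ν 0 0 with hb
  set c := ν 1 1 - ν 0 1 with hc
  set d := ν 2 1 - ν 0 1 with hd
  have hXr : ∀ r s t : ℝ, pdr (X ν) r s t = a := by
    intro r s t; rw [X, pdr_wedge, ← h00, ← h10]; ring
  have hXs : ∀ r s t : ℝ, pds (X ν) r s t = b := by
    intro r s t; rw [X, pds_wedge, ← h00, ← h20]; ring
  have hXt : ∀ r s t : ℝ, pdt (X ν) r s t = 0 := by
    intro r s t; rw [X, pdt_wedge, ← h00, ← h10, ← h20]; ring
  have hYr : ∀ r s t : ℝ, pdr (Y ν) r s t = c := by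
    intro r s t; rw [Y, pdr_wedge, ← h01, ← h11]; ring
  have hYs : ∀ r s t : ℝ, pds (Y ν) r s t = d := by
    intro r s t; rw [Y, pds_wedge, ← h01, ← h21]; ring
  have hYt : ∀ r s t : ℝ, pdt (Y ν) r s t = 0 := by
    intro r s t; rw [Y, pdt_wedge, ← h01, ← h11, ← h21]; ring
  set D := a * d - c * b with hD
  have hJeq : ∀ r s t : ℝ, wedgeJac ν r s t = D * pdt (Z ν) r s t := by
    intro r s t
    have e0 : wedgeMap ν 0 = X ν := rfl
    have e1 : wedgeMap ν 1 = Y ν := rfl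
    have e2 : wedgeMap ν 2 = Z ν := rfl
    rw [wedgeJac]
    simp [Matrix.det_fin_three, e0, e1, e2, hXr, hXs, hXt, hYr, hYs, hYt]
    ring
  have hZt : ∀ r s t : ℝ, pdt (Z ν) r s t ≠ 0 := by
    intro r s t h
    have := hJ r s t
    rw [hJeq, h, mul_zero] at this
    exact lt_irrefl 0 this
  have hDne : D ≠ 0 := by
    intro h
    have := hJ 0 0 0
    rw [hJeq, h, zero_mul] at this
    exact lt_irrefl 0 this
  have key : ∀ r s t : ℝ,
      gRx ν r s t = d / D ∧ gRy ν r s t = -b / D ∧ gSx ν r s t = -c / D ∧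
      gSy ν r s t = a / D ∧ gTzJ ν r s t = D := by
    intro r s t
    have hz := hZt r s t
    refine ⟨?_, ?_, ?_, ?_, ?_⟩
    · rw [gRx, hJeq, hYs, hYt, mul_zero, sub_zero]
      field_simp
    · rw [gRy, hJeq, hXs, hXt, mul_zero, sub_zero, ← neg_mul]
      field_simp
    · rw [gSx, hJeq, hYr, hYt, mul_zero, sub_zero, ← neg_mul]
      field_simp
    · rw [gSy, hJeq, hXr, hXt, mul_zero, sub_zero]
      field_simp
    · rw [gTzJ, hXr, hXs, hYr, hYs, hD]
  intro r s t r' s' t'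
  obtain ⟨e1, e2, e3, e4, e5⟩ := key r s t
  obtain ⟨f1, f2, f3, f4, f5⟩ := key r' s' t'
  exact ⟨e1.trans f1.symm, e2.trans f2.symm, e3.trans f3.symm,
    e4.trans f4.symm, e5.trans f5.symm⟩
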